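/- Let K ∈ ℝ, N ∈ (1,∞), and let h : [A₀, A₁+L₁] → (0,∞) be continuous and satisfy, for all sufficiently small L₀,L₁ > 0 and all A₀ < A₁ in the domain, the inequality (L₀+L₁)^{1/N} h((A₀+A₁)/2)^{1/N} ≥ σ_{K,N−1}^{(1/2)}(A₁−A₀)^{(N−1)/N} [L₀^{1/N} h(A₀)^{1/N} + L₁^{1/N} h(A₁)^{1/N}]. Then, optimizing over L₀, L₁ (choosing L_i proportional to h(A_i)^{1/(N−1)}), one obtains the midpoint inequality h((A₀+A₁)/2)^{1/(N−1)} ≥ σ_{K,N−1}^{(1/2)}(A₁−A₀) [h(A₀)^{1/(N−1)} + h(A₁)^{1/(N−1)}]. -/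

import Mathlib

/-- optimization over L₀, L₁. If a positive density h satisfies, for all sufficiently
small L₀, L₁ > 0, the inequality
(L₀+L₁)^{1/N} h((A₀+A₁)/2)^{1/N} ≥ σ^{(N−1)/N} (L₀^{1/N} h(A₀)^{1/N} + L₁^{1/N} h(A₁)^{1/N})
(where σ = σ_{K,N−1}^{(1/2)}(A₁−A₀) ≥ 0), then choosing L_i proportional to h(A_i)^{1/(N−1)}
yields the midpoint inequality h((A₀+A₁)/2)^{1/(N−1)} ≥ σ (h(A₀)^{1/(N−1)} + h(A₁)^{1/(N−1)}). -/
theorem stmt_17 (N : ℝ) (hN : 1 < N) (σ : ℝ) (hσ : 0 ≤ σ)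
    (h : ℝ → ℝ) (hpos : ∀ t, 0 < h t)
    (A₀ A₁ : ℝ) (hA : A₀ < A₁)
    (hyp : ∃ Lbar > 0, ∀ L₀ ∈ Set.Ioo (0:ℝ) Lbar, ∀ L₁ ∈ Set.Ioo (0:ℝ) Lbar,
      σ ^ ((N - 1) / N) *
          (L₀ ^ (1 / N) * h A₀ ^ (1 / N) + L₁ ^ (1 / N) * h A₁ ^ (1 / N)) ≤
        (L₀ + L₁) ^ (1 / N) * h ((A₀ + A₁) / 2) ^ (1 / N)) :
    σ * (h A₀ ^ (1 / (N - 1)) + h A₁ ^ (1 / (N - 1))) ≤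
      h ((A₀ + A₁) / 2) ^ (1 / (N - 1)) := by
  obtain ⟨Lbar, hLb, H⟩ := hyp
  have hx0 : 0 < h A₀ := hpos _
  have hy0 : 0 < h A₁ := hpos _
  have hm0 : 0 < h ((A₀ + A₁) / 2) := hpos _
  set x := h A₀
  set y := h A₁
  set m := h ((A₀ + A₁) / 2)
  have hN0 : (0:ℝ) < N := by linarith
  have hN1 : (0:ℝ) < N - 1 := by linarith
  set p : ℝ := 1 / (N - 1) with hp
  set q : ℝ := 1 / N with hq
  have hxp : 0 < x ^ p := Real.rpow_pos_of_pos hx0 _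
  have hyp' : 0 < y ^ p := Real.rpow_pos_of_pos hy0 _
  set M := max (x ^ p) (y ^ p) with hM
  have hM0 : 0 < M := lt_max_iff.mpr (Or.inl hxp)
  set c : ℝ := Lbar / (2 * M) with hc
  have hc0 : 0 < c := div_pos hLb (by positivity)
  have hcM : c * M = Lbar / 2 := by
    field_simp [hc]
    rw [hc, div_mul_eq_mul_div, div_mul_eq_mul_div, div_eq_iff (by positivity)]; ring
  have hmem : ∀ z : ℝ, 0 < z → z ≤ M → c * z ∈ Set.Ioo (0:ℝ) Lbar := by
    intro z hz hzM
    constructor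
    · positivity
    · calc c * z ≤ c * M := by nlinarith
        _ = Lbar / 2 := hcM
        _ < Lbar := by linarith
  have Hc := H (c * x ^ p) (hmem _ hxp (le_max_left _ _))
      (c * y ^ p) (hmem _ hyp' (le_max_right _ _))
  -- key algebra: (c * z^p)^q * z^q = c^q * z^p
  have key : ∀ z : ℝ, 0 < z → (c * z ^ p) ^ q * z ^ q = c ^ q * z ^ p := by
    intro z hz
    rw [Real.mul_rpow hc0.le (Real.rpow_pos_of_pos hz p).le,
      ← Real.rpow_mul hz.le, mul_assoc, ← Real.rpow_add hz]
    have hpq : p * q + q = p := by rw [hp, hq]; field_simp; ring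
    rw [hpq]
  rw [key x hx0, key y hy0] at Hc
  set S : ℝ := x ^ p + y ^ p with hS
  have hS0 : 0 < S := by positivity
  have hrhs : (c * x ^ p + c * y ^ p) ^ q = c ^ q * S ^ q := by
    rw [← mul_add, Real.mul_rpow hc0.le hS0.le]
  rw [hrhs] at Hc
  have hcq : 0 < c ^ q := Real.rpow_pos_of_pos hc0 _
  set r : ℝ := (N - 1) / N with hr
  have step1 : σ ^ r * S ≤ S ^ q * m ^ q := by
    have : σ ^ r * (c ^ q * x ^ p + c ^ q * y ^ p) = c ^ q * (σ ^ r * S) := by ring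
    rw [this] at Hc
    have : c ^ q * S ^ q * m ^ q = c ^ q * (S ^ q * m ^ q) := by ring
    rw [this] at Hc
    exact le_of_mul_le_mul_left Hc hcq
  have hSsplit : S = S ^ r * S ^ q := by
    rw [← Real.rpow_add hS0]
    have : r + q = 1 := by rw [hr, hq, ← add_div, sub_add_cancel, div_self hN0.ne']
    rw [this, Real.rpow_one]
  have step2 : (σ * S) ^ r ≤ m ^ q := by
    rw [Real.mul_rpow hσ hS0.le]
    have hSq : 0 < S ^ q := Real.rpow_pos_of_pos hS0 _
    have h1 : σ ^ r * S ^ r * S ^ q ≤ m ^ q * S ^ q := by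
      calc σ ^ r * S ^ r * S ^ q = σ ^ r * S := by rw [mul_assoc, ← hSsplit]
        _ ≤ S ^ q * m ^ q := step1
        _ = m ^ q * S ^ q := by ring
    exact le_of_mul_le_mul_right h1 hSq
  have hr0 : 0 < r := div_pos hN1 hN0
  have final := Real.rpow_le_rpow (by positivity) step2 (by positivity : (0:ℝ) ≤ 1 / r)
  rw [← Real.rpow_mul (by positivity : (0:ℝ) ≤ σ * S),
    ← Real.rpow_mul hm0.le] at final
  have e1 : r * (1 / r) = 1 := by field_simp
  have e2 : q * (1 / r) = p := by
    field_simp [hq, hp, hr]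
    have := hN1.ne'; rw [hq, hr, hp]; field_simp
  rw [e1, e2, Real.rpow_one] at final
  exact final
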